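/- Let X = {(u,v) ∈ ℝ² : uv > 0} ∪ {(0,0)} with the Euclidean subspace topology and coordinatewise partial order ≤. Then for the point θ = (0,0) and for any a, b ∈ X with b ≤ θ ≤ a, b ≠ θ ≠ a, and θ ∈ interior(b↑ ∩ a↓) (interior taken in X), the set (b↑ ∩ a↓) ∖ interior(a↓) is not compact. -/

import Mathlib

def X6 : Set (ℝ × ℝ) := {p | p.1 * p.2 > 0} ∪ {(0, 0)}

theorem stmt_6 (θ a b : ↥X6)
    (hθ : θ.val = (0, 0))
    (hba : b.val ≤ θ.val) (hθa : θ.val ≤ a.val)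
    (hbθ : b ≠ θ) (haθ : a ≠ θ)
    (hint : θ ∈ interior ({x : ↥X6 | b.val ≤ x.val} ∩ {x : ↥X6 | x.val ≤ a.val})) :
    ¬ IsCompact (({x : ↥X6 | b.val ≤ x.val} ∩ {x : ↥X6 | x.val ≤ a.val}) \
      interior {x : ↥X6 | x.val ≤ a.val}) := by
  intro hK
  have hane : a.val ≠ (0,0) := fun h => haθ (Subtype.ext (h.trans hθ.symm))
  have hbne : b.val ≠ (0,0) := fun h => hbθ (Subtype.ext (h.trans hθ.symm))
  have hamul : a.val.1 * a.val.2 > 0 := by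
    rcases a.2 with h | h
    · exact h
    · exact absurd h hane
  have hbmul : b.val.1 * b.val.2 > 0 := by
    rcases b.2 with h | h
    · exact h
    · exact absurd h hbne
  rw [hθ] at hθa hba
  have ha1 : (0:ℝ) ≤ a.val.1 := hθa.1
  have ha2 : (0:ℝ) ≤ a.val.2 := hθa.2
  have hb1 : b.val.1 ≤ (0:ℝ) := hba.1
  have hb2 : b.val.2 ≤ (0:ℝ) := hba.2
  have ha1p : 0 < a.val.1 := by
    rcases ha1.lt_or_eq with h | h
    · exact h
    · nlinarith
  have ha2p : 0 < a.val.2 := by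
    rcases ha2.lt_or_eq with h | h
    · exact h
    · nlinarith
  have hb1n : b.val.1 < 0 := by
    rcases hb1.lt_or_eq with h | h
    · exact h
    · nlinarith
  have hb2n : b.val.2 < 0 := by
    rcases hb2.lt_or_eq with h | h
    · exact h
    · nlinarith
  -- points (a₁, t) with t > 0 on the boundary are not in the interior of a↓
  have hnint : ∀ (x : ↥X6), 0 < x.val.2 → x.val.1 = a.val.1 →
      x ∉ interior {y : ↥X6 | y.val ≤ a.val} := by
    intro x ht hx1 hmem
    have hnhds : {y : ↥X6 | y.val ≤ a.val} ∈ nhds x := mem_interior_iff_mem_nhds.mp hmem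
    have hqmem : ∀ n : ℕ, ((a.val.1 + 1/(n+1), x.val.2) : ℝ × ℝ) ∈ X6 := by
      intro n
      left
      have h1 : (0:ℝ) < a.val.1 + 1/(n+1) := by positivity
      exact mul_pos h1 ht
    set q : ℕ → ↥X6 := fun n => ⟨(a.val.1 + 1/(n+1), x.val.2), hqmem n⟩ with hq
    have hxval : x.val = (a.val.1, x.val.2) := by
      ext
      · exact hx1
      · rfl
    have htv : Filter.Tendsto (fun n : ℕ => ((a.val.1 + 1/(n+1), x.val.2) : ℝ × ℝ))
        Filter.atTop (nhds x.val) := by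
      rw [hxval]
      apply Filter.Tendsto.prodMk_nhds
      · simpa using tendsto_const_nhds.add (tendsto_one_div_add_atTop_nhds_zero_nat (𝕜 := ℝ))
      · exact tendsto_const_nhds
    have htend : Filter.Tendsto q Filter.atTop (nhds x) := by
      rw [Topology.IsEmbedding.subtypeVal.tendsto_nhds_iff]
      exact htv
    have hev : ∀ᶠ n in Filter.atTop, q n ∈ {y : ↥X6 | y.val ≤ a.val} :=
      htend.eventually_mem hnhds
    obtain ⟨n, hn⟩ := hev.exists
    have : a.val.1 + 1/(n+1) ≤ a.val.1 := hn.1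
    have hpos : (0:ℝ) < 1/(n+1) := by positivity
    linarith
  -- the sequence (a₁, a₂/(n+1)) lies in the set
  have hpmemX : ∀ n : ℕ, ((a.val.1, a.val.2/(n+1)) : ℝ × ℝ) ∈ X6 := by
    intro n
    left
    have h2 : (0:ℝ) < a.val.2/(n+1) := by positivity
    exact mul_pos ha1p h2
  have hpmemK : ∀ n : ℕ, ((a.val.1, a.val.2/(n+1)) : ℝ × ℝ) ∈
      Subtype.val '' ((({x : ↥X6 | b.val ≤ x.val} ∩ {x : ↥X6 | x.val ≤ a.val}) \
        interior {x : ↥X6 | x.val ≤ a.val})) := by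
    intro n
    refine ⟨⟨(a.val.1, a.val.2/(n+1)), hpmemX n⟩, ⟨⟨⟨?_, ?_⟩, ⟨le_refl _, ?_⟩⟩, ?_⟩, rfl⟩
    · exact le_of_lt (lt_of_lt_of_le hb1n ha1)
    · have : (0:ℝ) < a.val.2/(n+1) := by positivity
      exact le_of_lt (lt_trans hb2n this)
    · have hn1 : (1:ℝ) ≤ (n:ℝ)+1 := by
        have : (0:ℝ) ≤ n := Nat.cast_nonneg n
        linarith
      exact div_le_self ha2 hn1
    · apply hnint
      · show (0:ℝ) < a.val.2/(n+1)
        positivity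
      · rfl
  have hKc : IsCompact (Subtype.val '' ((({x : ↥X6 | b.val ≤ x.val} ∩ {x : ↥X6 | x.val ≤ a.val}) \
        interior {x : ↥X6 | x.val ≤ a.val}))) := hK.image continuous_subtype_val
  have hclosed := hKc.isClosed
  have htend2 : Filter.Tendsto (fun n : ℕ => ((a.val.1, a.val.2/(n+1)) : ℝ × ℝ))
      Filter.atTop (nhds (a.val.1, 0)) := by
    apply Filter.Tendsto.prodMk_nhds
    · exact tendsto_const_nhds
    · have : Filter.Tendsto (fun n : ℕ => a.val.2 * (1/(n+1))) Filter.atTop (nhds (a.val.2 * 0)) :=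
        tendsto_one_div_add_atTop_nhds_zero_nat.const_mul a.val.2
      simpa [div_eq_mul_inv, one_div, mul_comm] using this
  have hmem' : ((a.val.1, 0) : ℝ × ℝ) ∈
      Subtype.val '' ((({x : ↥X6 | b.val ≤ x.val} ∩ {x : ↥X6 | x.val ≤ a.val}) \
        interior {x : ↥X6 | x.val ≤ a.val})) :=
    hclosed.mem_of_tendsto htend2 (Filter.Eventually.of_forall hpmemK)
  obtain ⟨y, _, hyval⟩ := hmem'
  have hyX : y.val ∈ X6 := y.2
  rw [hyval] at hyX
  rcases hyX with h | h
  · simp at h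
  · have : a.val.1 = 0 := (Prod.ext_iff.mp h).1
    linarith
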